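/- Let H be a complex inner product space and let A : Fin 5 → Fin 2 → (H →ₗ[ℂ] H) satisfy: each A i x is self-adjoint (symmetric), (A i x) ∘ (A i x) = id, and A i x commutes with A j y whenever i ≠ j. Define X'₁ = (A 1 0 + A 1 1)/√2, Z'₁ = (A 1 0 − A 1 1)/√2, X'ᵢ = A i 0, Z'ᵢ = A i 1 for i = 2,…,5, S'₁ = X'₁Z'₂Z'₃X'₄, S'₂ = X'₂Z'₃Z'₄X'₅, S'₃ = X'₁X'₃Z'₄Z'₅, S'₄ = Z'₁X'₂X'₄Z'₅, and B₅ = √2·S'₁ + S'₂ + √2·S'₃ + 2√2·S'₄. Then for every vector φ ∈ H, the real part of ⟪φ, B₅ φ⟫ is at most (1 + 4√2)·‖φ‖². -/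
import Mathlib


noncomputable section

open scoped InnerProductSpace

namespace BellI5

variable {H : Type*} [NormedAddCommGroup H] [InnerProductSpace ℂ H]

/-- The effective `X` observable at each site (site `0` plays the special role). -/
def Xop (A : Fin 5 → Fin 2 → Module.End ℂ H) (i : Fin 5) : Module.End ℂ H :=
  if i = 0 then (Real.sqrt 2 : ℂ)⁻¹ • (A 0 0 + A 0 1) else A i 0

/-- The effective `Z` observable at each site (site `0` plays the special role). -/
def Zop (A : Fin 5 → Fin 2 → Module.End ℂ H) (i : Fin 5) : Module.End ℂ H :=
  if i = 0 then (Real.sqrt 2 : ℂ)⁻¹ • (A 0 0 - A 0 1) else A i 1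

/-- The four operators `S'₁, S'₂, S'₃, S'₄` built from the measurement observables. -/
def S (A : Fin 5 → Fin 2 → Module.End ℂ H) : Fin 4 → Module.End ℂ H :=
  ![Xop A 0 * Zop A 1 * Zop A 2 * Xop A 3,
    Xop A 1 * Zop A 2 * Zop A 3 * Xop A 4,
    Xop A 0 * Xop A 2 * Zop A 3 * Zop A 4,
    Zop A 0 * Xop A 1 * Xop A 3 * Zop A 4]

/-- The Bell operator `B₅ = √2·S'₁ + S'₂ + √2·S'₃ + 2√2·S'₄`. -/
def Bell (A : Fin 5 → Fin 2 → Module.End ℂ H) : Module.End ℂ H :=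
  (Real.sqrt 2 : ℂ) • S A 0 + S A 1 + (Real.sqrt 2 : ℂ) • S A 2 +
    ((2 * Real.sqrt 2 : ℝ) : ℂ) • S A 3

/-- the Tsirelson bound `re⟪φ, B₅ φ⟫ ≤ (1 + 4√2)·‖φ‖²` for self-adjoint
dichotomic observables commuting across different sites. -/
theorem quantum_bound (A : Fin 5 → Fin 2 → Module.End ℂ H)
    (hsa : ∀ i x (u v : H), ⟪A i x u, v⟫_ℂ = ⟪u, A i x v⟫_ℂ)
    (hsq : ∀ i x, A i x * A i x = 1)
    (hcomm : ∀ i j x y, i ≠ j → A i x * A j y = A j y * A i x) :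
    ∀ φ : H, (⟪φ, Bell A φ⟫_ℂ).re ≤ (1 + 4 * Real.sqrt 2) * ‖φ‖ ^ 2 := by
  intro φ
  have hs0 : (0:ℝ) < Real.sqrt 2 := Real.sqrt_pos.mpr (by norm_num)
  have hsC : (Real.sqrt 2 : ℂ) ≠ 0 := by
    exact_mod_cast Complex.ofReal_ne_zero.mpr (ne_of_gt hs0)
  -- single-operator norm preservation
  have hnorm : ∀ i x (w : H), ‖A i x w‖ = ‖w‖ := by
    intro i x w
    have hfix : A i x (A i x w) = w := by
      have := congrArg (fun T : Module.End ℂ H => T w) (hsq i x)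
      simpa [Module.End.mul_apply] using this
    have h1 : ⟪A i x w, A i x w⟫_ℂ = ⟪w, w⟫_ℂ := by
      rw [hsa i x, hfix]
    have h3 : ‖A i x w‖ ^ 2 = ‖w‖ ^ 2 := by
      have h2 := congrArg Complex.re h1
      rwa [← RCLike.re_to_complex, ← RCLike.re_to_complex,
        inner_self_eq_norm_sq, inner_self_eq_norm_sq] at h2
    have := congrArg Real.sqrt h3
    simpa [Real.sqrt_sq, norm_nonneg] using this
  set u : Module.End ℂ H := A 0 0 with hu
  set v : Module.End ℂ H := A 0 1 with hv
  set M₁ : Module.End ℂ H := A 1 1 * A 2 1 * A 3 0 with hM1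
  set M₃ : Module.End ℂ H := A 2 0 * A 3 1 * A 4 1 with hM3
  set M₄ : Module.End ℂ H := A 1 0 * A 3 0 * A 4 1 with hM4
  set P : Module.End ℂ H := M₁ + M₃ + (2:ℂ) • M₄ with hP
  set Q : Module.End ℂ H := M₁ + M₃ - (2:ℂ) • M₄ with hQ
  -- operator identity
  have e1 : (Real.sqrt 2 : ℂ) • S A 0 = (u + v) * M₁ := by
    show (Real.sqrt 2 : ℂ) • (Xop A 0 * Zop A 1 * Zop A 2 * Xop A 3) = _
    simp only [Xop, Zop, if_pos rfl, if_true, ite_true, if_neg (by decide : (1:Fin 5) ≠ 0),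
      if_neg (by decide : (2:Fin 5) ≠ 0), if_neg (by decide : (3:Fin 5) ≠ 0),
      smul_mul_assoc, smul_smul, mul_inv_cancel₀ hsC, one_smul, hM1, hu, hv, mul_assoc]
  have e3 : (Real.sqrt 2 : ℂ) • S A 2 = (u + v) * M₃ := by
    show (Real.sqrt 2 : ℂ) • (Xop A 0 * Xop A 2 * Zop A 3 * Zop A 4) = _
    simp only [Xop, Zop, if_pos rfl, if_true, ite_true, if_neg (by decide : (2:Fin 5) ≠ 0),
      if_neg (by decide : (3:Fin 5) ≠ 0), if_neg (by decide : (4:Fin 5) ≠ 0),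
      smul_mul_assoc, smul_smul, mul_inv_cancel₀ hsC, one_smul, hM3, hu, hv, mul_assoc]
  have e4 : ((2 * Real.sqrt 2 : ℝ) : ℂ) • S A 3 = (2:ℂ) • ((u - v) * M₄) := by
    show ((2 * Real.sqrt 2 : ℝ) : ℂ) • (Zop A 0 * Xop A 1 * Xop A 3 * Zop A 4) = _
    have hc : ((2 * Real.sqrt 2 : ℝ) : ℂ) * (Real.sqrt 2 : ℂ)⁻¹ = 2 := by
      push_cast
      field_simp
    simp only [Xop, Zop, if_pos rfl, if_true, ite_true, if_neg (by decide : (1:Fin 5) ≠ 0),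
      if_neg (by decide : (3:Fin 5) ≠ 0), if_neg (by decide : (4:Fin 5) ≠ 0),
      smul_mul_assoc, smul_smul, hc, hM4, hu, hv, mul_assoc]
  have e2 : S A 1 = A 1 0 * (A 2 1 * (A 3 1 * A 4 0)) := by
    show Xop A 1 * Zop A 2 * Zop A 3 * Xop A 4 = _
    simp only [Xop, Zop, if_neg (by decide : (1:Fin 5) ≠ 0),
      if_neg (by decide : (2:Fin 5) ≠ 0), if_neg (by decide : (3:Fin 5) ≠ 0),
      if_neg (by decide : (4:Fin 5) ≠ 0), mul_assoc]
  have hB : Bell A = S A 1 + (u * P + v * Q) := by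
    rw [Bell, e1, e3, e4, hP, hQ]
    simp only [mul_add, add_mul, mul_sub, sub_mul, mul_smul_comm, smul_add, smul_sub]
    module
  -- apply to φ and split the inner product
  have happ : Bell A φ = S A 1 φ + ((A 0 0) (P φ) + (A 0 1) (Q φ)) := by
    rw [hB, hu, hv]
    simp [LinearMap.add_apply, Module.End.mul_apply]
  set a : H := M₁ φ + M₃ φ with ha
  set b : H := (2:ℂ) • M₄ φ with hb
  have hPφ : P φ = a + b := by
    simp [hP, LinearMap.add_apply, LinearMap.smul_apply, ha, hb]
  have hQφ : Q φ = a - b := by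
    simp [hQ, LinearMap.sub_apply, LinearMap.add_apply, LinearMap.smul_apply, ha, hb]
  have hi : (⟪φ, Bell A φ⟫_ℂ).re
      = (⟪φ, S A 1 φ⟫_ℂ).re + ((⟪A 0 0 φ, a + b⟫_ℂ).re + (⟪A 0 1 φ, a - b⟫_ℂ).re) := by
    rw [happ, inner_add_right, inner_add_right, ← hsa 0 0 φ (P φ), ← hsa 0 1 φ (Q φ),
      hPφ, hQφ, Complex.add_re, Complex.add_re]
  -- norms of the words
  have hM1n : ‖M₁ φ‖ = ‖φ‖ := by rw [hM1]; simp [Module.End.mul_apply, hnorm]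
  have hM3n : ‖M₃ φ‖ = ‖φ‖ := by rw [hM3]; simp [Module.End.mul_apply, hnorm]
  have hM4n : ‖M₄ φ‖ = ‖φ‖ := by rw [hM4]; simp [Module.End.mul_apply, hnorm]
  have hS2n : ‖S A 1 φ‖ = ‖φ‖ := by rw [e2]; simp [Module.End.mul_apply, hnorm]
  have hun : ‖A 0 0 φ‖ = ‖φ‖ := hnorm 0 0 φ
  have hvn : ‖A 0 1 φ‖ = ‖φ‖ := hnorm 0 1 φ
  have han : ‖a‖ ≤ 2 * ‖φ‖ := by
    calc ‖a‖ ≤ ‖M₁ φ‖ + ‖M₃ φ‖ := norm_add_le _ _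
    _ = 2 * ‖φ‖ := by rw [hM1n, hM3n]; ring
  have hbn : ‖b‖ = 2 * ‖φ‖ := by
    rw [hb, norm_smul, hM4n]; simp
  have hpar := parallelogram_law_with_norm ℂ a b
  -- Cauchy–Schwarz on each term
  have c1 : (⟪φ, S A 1 φ⟫_ℂ).re ≤ ‖φ‖ * ‖φ‖ := by
    have := re_inner_le_norm (𝕜 := ℂ) φ (S A 1 φ)
    rw [RCLike.re_to_complex, hS2n] at this
    exact this
  have c2 : (⟪A 0 0 φ, a + b⟫_ℂ).re ≤ ‖φ‖ * ‖a + b‖ := by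
    have := re_inner_le_norm (𝕜 := ℂ) (A 0 0 φ) (a + b)
    rwa [RCLike.re_to_complex, hun] at this
  have c3 : (⟪A 0 1 φ, a - b⟫_ℂ).re ≤ ‖φ‖ * ‖a - b‖ := by
    have := re_inner_le_norm (𝕜 := ℂ) (A 0 1 φ) (a - b)
    rwa [RCLike.re_to_complex, hvn] at this
  have hsq2 : Real.sqrt 2 ^ 2 = 2 := Real.sq_sqrt (by norm_num)
  have hφ0 : (0:ℝ) ≤ ‖φ‖ := norm_nonneg φ
  have hab1 : (0:ℝ) ≤ ‖a + b‖ := norm_nonneg _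
  have hab2 : (0:ℝ) ≤ ‖a - b‖ := norm_nonneg _
  have ha0 : (0:ℝ) ≤ ‖a‖ := norm_nonneg _
  rw [hi]
  nlinarith [sq_nonneg (‖a + b‖ - ‖a - b‖),
    sq_nonneg (‖a + b‖ + ‖a - b‖ - 4 * Real.sqrt 2 * ‖φ‖),
    mul_nonneg hφ0 hab1, mul_nonneg hφ0 hab2, hs0.le,
    mul_nonneg (mul_nonneg hφ0 hφ0) hs0.le, sq_nonneg (‖a‖ - 2*‖φ‖)]

end BellI5
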